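/- Let X and Y be Banach spaces, let W₁ ⊆ X be a norm compact (i.e., norm closed and relatively norm compact) set and let W₂ ⊆ Y be a weakly compact set. Then the set W₁ ⊗ W₂ := {x ⊗ y : x ∈ W₁, y ∈ W₂} is weakly compact in the projective tensor product X ⊗π Y. -/

import Mathlib

open Filter Topology Pointwise MeasureTheory
open scoped ENNReal

/-- A set is weakly compact if its image in the weak space is compact. -/
def WeaklyCompact {Z : Type*} [NormedAddCommGroup Z] [NormedSpace ℝ Z] (K : Set Z) : Prop :=
  IsCompact (toWeakSpace ℝ Z '' K)

/-- A set is relatively weakly compact if the weak closure of its image in the weak space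
is compact. -/
def RelWeaklyCompact {Z : Type*} [NormedAddCommGroup Z] [NormedSpace ℝ Z] (K : Set Z) : Prop :=
  IsCompact (closure (toWeakSpace ℝ Z '' K))

/-- A set is conditionally weakly compact (weakly precompact) if every sequence in it has a
weakly Cauchy subsequence. -/
def CondWeaklyCompact {Z : Type*} [NormedAddCommGroup Z] [NormedSpace ℝ Z] (D : Set Z) : Prop :=
  ∀ u : ℕ → Z, (∀ n, u n ∈ D) → ∃ φ : ℕ → ℕ, StrictMono φ ∧
    ∀ f : Z →L[ℝ] ℝ, ∃ l : ℝ, Tendsto (fun n => f (u (φ n))) atTop (nhds l)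

/-- `Z` is strongly weakly compactly generated by the weakly compact set `G`. -/
def SWCGBy {Z : Type*} [NormedAddCommGroup Z] [NormedSpace ℝ Z] (G : Set Z) : Prop :=
  WeaklyCompact G ∧ ∀ K : Set Z, WeaklyCompact K → ∀ ε : ℝ, 0 < ε →
    ∃ n : ℕ, K ⊆ (n : ℝ) • G + Metric.closedBall (0 : Z) ε

/-- A Banach space is strongly weakly compactly generated. -/
def IsSWCG (Z : Type*) [NormedAddCommGroup Z] [NormedSpace ℝ Z] : Prop :=
  ∃ G : Set Z, SWCGBy G

/-- A Banach space is strongly conditionally weakly compactly generated. -/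
def IsSCWCG (Z : Type*) [NormedAddCommGroup Z] [NormedSpace ℝ Z] : Prop :=
  ∃ G : Set Z, CondWeaklyCompact G ∧ ∀ C : Set Z, CondWeaklyCompact C → ∀ ε : ℝ, 0 < ε →
    ∃ n : ℕ, C ⊆ (n : ℝ) • G + Metric.closedBall (0 : Z) ε

/-- A Banach space is weakly sequentially complete if every weakly Cauchy sequence is weakly
convergent. -/
def WeaklySeqComplete (Z : Type*) [NormedAddCommGroup Z] [NormedSpace ℝ Z] : Prop :=
  ∀ u : ℕ → Z, (∀ f : Z →L[ℝ] ℝ, ∃ l : ℝ, Tendsto (fun n => f (u n)) atTop (nhds l)) →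
    ∃ z : Z, ∀ f : Z →L[ℝ] ℝ, Tendsto (fun n => f (u n)) atTop (nhds (f z))

/-- A Banach space has the Schur property if weakly convergent sequences are norm convergent. -/
def SchurProperty (Z : Type*) [NormedAddCommGroup Z] [NormedSpace ℝ Z] : Prop :=
  ∀ u : ℕ → Z, ∀ z : Z,
    (∀ f : Z →L[ℝ] ℝ, Tendsto (fun n => f (u n)) atTop (nhds (f z))) →
      Tendsto u atTop (nhds z)

/-- `Z`, together with the continuous bilinear map `t`, is (a realization of) the projective
tensor product `X ⊗π Y`: the elementary tensors span a dense subspace, on that subspace the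
norm is the projective norm, and every bilinear functional of norm at most one induces a
functional on `Z` of norm at most one. -/
def IsProjTensorProduct {X Y Z : Type*} [NormedAddCommGroup X] [NormedSpace ℝ X]
    [NormedAddCommGroup Y] [NormedSpace ℝ Y] [NormedAddCommGroup Z] [NormedSpace ℝ Z]
    (t : X →L[ℝ] Y →L[ℝ] Z) : Prop :=
  Dense ((Submodule.span ℝ {z : Z | ∃ x y, z = t x y} : Submodule ℝ Z) : Set Z) ∧
  (∀ z : Z, z ∈ Submodule.span ℝ {z : Z | ∃ x y, z = t x y} →
    ‖z‖ = sInf {r : ℝ | ∃ (n : ℕ) (x : Fin n → X) (y : Fin n → Y),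
      z = ∑ i, t (x i) (y i) ∧ r = ∑ i, ‖x i‖ * ‖y i‖}) ∧
  (∀ B : X →L[ℝ] Y →L[ℝ] ℝ, ‖B‖ ≤ 1 →
    ∃ φ : Z →L[ℝ] ℝ, ‖φ‖ ≤ 1 ∧ ∀ x y, φ (t x y) = B x y)

/-- An unconditional Schauder decomposition of `X` indexed by `I`, given by its family of
projections `proj C` for `C ⊆ I`: each `proj C x` is the unconditional sum of the coordinate
projections `proj {i} x`, `i ∈ C`, the coordinate projections are pairwise disjoint idempotents
and they sum to the identity. -/
structure SchauderDecomp (I : Type*) (X : Type*) [NormedAddCommGroup X]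
    [NormedSpace ℝ X] where
  proj : Set I → (X →L[ℝ] X)
  hasSum_proj : ∀ (C : Set I) (x : X), HasSum (fun i : C => proj {(i : I)} x) (proj C x)
  proj_univ : ∀ x, proj Set.univ x = x
  proj_idem : ∀ i : I, ∀ x, proj {i} (proj {i} x) = proj {i} x
  proj_disjoint : ∀ i j : I, i ≠ j → ∀ x, proj {i} (proj {j} x) = 0

/-- The decomposition is finite dimensional if each coordinate subspace is finite dimensional. -/
def SchauderDecomp.FinDim {I X : Type*} [NormedAddCommGroup X] [NormedSpace ℝ X]
    (d : SchauderDecomp I X) : Prop :=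
  ∀ i : I, FiniteDimensional ℝ (LinearMap.range ((d.proj {i}) : X →ₗ[ℝ] X))

/-- The decomposition has a disjoint lower `p`-estimate. -/
def SchauderDecomp.DisjLowerEstimate {I X : Type*} [NormedAddCommGroup X] [NormedSpace ℝ X]
    (d : SchauderDecomp I X) (p : ℝ) : Prop :=
  ∃ c : ℝ, 0 < c ∧ ∀ (r : ℕ) (C : Fin r → Set I), (∀ k, (C k).Finite) →
    (Pairwise fun k l => Disjoint (C k) (C l)) →
    ∀ x : X, (∑ k, ‖d.proj (C k) x‖ ^ p) ^ (1 / p) ≤ c * ‖x‖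


lemma bounded_of_weaklyCompact' {Y : Type*} [NormedAddCommGroup Y] [NormedSpace ℝ Y]
    {W : Set Y} (hW : IsCompact (toWeakSpace ℝ Y '' W)) : ∃ M : ℝ, ∀ y ∈ W, ‖y‖ ≤ M := by
  rcases W.eq_empty_or_nonempty with rfl | ⟨y₀, hy₀⟩
  · exact ⟨0, by simp⟩
  have hpt : ∀ φ : Y →L[ℝ] ℝ, ∃ C : ℝ,
      ∀ y : W, ‖(NormedSpace.inclusionInDoubleDual ℝ Y (y : Y)) φ‖ ≤ C := by
    intro φ
    have hcont : Continuous fun w : WeakSpace ℝ Y => (topDualPairing ℝ Y).flip w φ :=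
      WeakBilin.eval_continuous _ φ
    have hcomp : IsCompact ((fun w : WeakSpace ℝ Y => (topDualPairing ℝ Y).flip w φ) ''
        (toWeakSpace ℝ Y '' W)) := hW.image hcont
    obtain ⟨C, hC⟩ := hcomp.isBounded.exists_norm_le
    refine ⟨C, fun y => ?_⟩
    have : φ (y : Y) ∈ (fun w : WeakSpace ℝ Y => (topDualPairing ℝ Y).flip w φ) ''
        (toWeakSpace ℝ Y '' W) := ⟨toWeakSpace ℝ Y y, ⟨y, y.2, rfl⟩, rfl⟩
    simpa using hC _ this
  obtain ⟨C', hC'⟩ := banach_steinhaus (E := Y →L[ℝ] ℝ) (F := ℝ)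
    (g := fun y : W => NormedSpace.inclusionInDoubleDual ℝ Y (y : Y))
    (fun φ => hpt φ)
  refine ⟨C', fun y hy => ?_⟩
  have := (NormedSpace.inclusionInDoubleDualLi ℝ (E := Y)).norm_map y
  rw [← this]
  exact hC' ⟨y, hy⟩

lemma weak_inj (Z : Type*) [NormedAddCommGroup Z] [NormedSpace ℝ Z] :
    Function.Injective ((topDualPairing ℝ Z).flip) := by
  intro a b hab
  exact (NormedSpace.eq_iff_forall_dual_eq ℝ).mpr fun g => DFunLike.congr_fun hab g

theorem statement1' {X Y Z : Type*}
    [NormedAddCommGroup X] [NormedSpace ℝ X] [CompleteSpace X]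
    [NormedAddCommGroup Y] [NormedSpace ℝ Y] [CompleteSpace Y]
    [NormedAddCommGroup Z] [NormedSpace ℝ Z] [CompleteSpace Z]
    (t : X →L[ℝ] Y →L[ℝ] Z)
    (W₁ : Set X) (hW₁ : IsCompact W₁)
    (W₂ : Set Y) (hW₂ : IsCompact (toWeakSpace ℝ Y '' W₂)) :
    IsCompact (toWeakSpace ℝ Z '' {z : Z | ∃ x ∈ W₁, ∃ y ∈ W₂, z = t x y}) := by
  obtain ⟨M, hM⟩ := bounded_of_weaklyCompact' hW₂
  have hM0 : 0 ≤ M ∨ W₂ = ∅ := by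
    rcases W₂.eq_empty_or_nonempty with h | ⟨y₀, hy₀⟩
    · exact Or.inr h
    · exact Or.inl ((norm_nonneg y₀).trans (hM y₀ hy₀))
  -- the product set
  set K : Set (X × WeakSpace ℝ Y) := W₁ ×ˢ (toWeakSpace ℝ Y '' W₂) with hKdef
  have hK : IsCompact K := hW₁.prod hW₂
  set g : X × WeakSpace ℝ Y → WeakSpace ℝ Z :=
    fun p => toWeakSpace ℝ Z (t p.1 ((toWeakSpace ℝ Y).symm p.2)) with hgdef
  have himg : toWeakSpace ℝ Z '' {z : Z | ∃ x ∈ W₁, ∃ y ∈ W₂, z = t x y} = g '' K := by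
    ext w
    constructor
    · rintro ⟨z, ⟨x, hx, y, hy, rfl⟩, rfl⟩
      exact ⟨(x, toWeakSpace ℝ Y y), ⟨hx, y, hy, rfl⟩, by simp [hgdef]⟩
    · rintro ⟨⟨x, w2⟩, ⟨hx, y, hy, rfl⟩, rfl⟩
      exact ⟨t x y, ⟨x, hx, y, hy, rfl⟩, by simp [hgdef]⟩
  rw [himg]
  refine hK.image_of_continuousOn ?_
  intro p₀ hp₀
  obtain ⟨hx₀, y₀, hy₀, hy₀eq⟩ : p₀.1 ∈ W₁ ∧ ∃ y ∈ W₂, toWeakSpace ℝ Y y = p₀.2 := by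
    simpa [hKdef, Set.mem_prod] using hp₀
  -- continuity within K at p₀, via evaluation against functionals
  rw [ContinuousWithinAt]
  refine (WeakBilin.tendsto_iff_forall_eval_tendsto (B := (topDualPairing ℝ Z).flip) (f := g) (x := g p₀) (weak_inj Z)).mpr ?_
  intro φ
  -- the target: fun p => φ (t p.1 ((toWeakSpace ℝ Y).symm p.2))
  have key : ∀ p : X × WeakSpace ℝ Y,
      (topDualPairing ℝ Z).flip (g p) φ
        = φ (t p₀.1 ((toWeakSpace ℝ Y).symm p.2))
          + φ (t (p.1 - p₀.1) ((toWeakSpace ℝ Y).symm p.2)) := by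
    intro p
    have : t p.1 ((toWeakSpace ℝ Y).symm p.2)
        = t p₀.1 ((toWeakSpace ℝ Y).symm p.2) + t (p.1 - p₀.1) ((toWeakSpace ℝ Y).symm p.2) := by
      rw [map_sub]; simp
    simp only [hgdef]
    show φ _ = _
    rw [this]
    exact map_add φ _ _
  have hlim1 : Tendsto (fun p : X × WeakSpace ℝ Y =>
      φ (t p₀.1 ((toWeakSpace ℝ Y).symm p.2))) (nhdsWithin p₀ K)
      (nhds (φ (t p₀.1 ((toWeakSpace ℝ Y).symm p₀.2)))) := by
    have hc : Continuous fun w : WeakSpace ℝ Y =>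
        (topDualPairing ℝ Y).flip w (φ.comp (t p₀.1)) := WeakBilin.eval_continuous _ _
    have : Continuous fun p : X × WeakSpace ℝ Y =>
        φ (t p₀.1 ((toWeakSpace ℝ Y).symm p.2)) := hc.comp continuous_snd
    exact (this.tendsto p₀).mono_left nhdsWithin_le_nhds
  have hlim2 : Tendsto (fun p : X × WeakSpace ℝ Y =>
      φ (t (p.1 - p₀.1) ((toWeakSpace ℝ Y).symm p.2))) (nhdsWithin p₀ K) (nhds 0) := by
    apply squeeze_zero_norm' (a := fun p : X × WeakSpace ℝ Y =>
      ‖φ‖ * ‖t‖ * ‖p.1 - p₀.1‖ * M)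
    · filter_upwards [self_mem_nhdsWithin] with p hp
      obtain ⟨-, y, hy, hyeq⟩ : p.1 ∈ W₁ ∧ ∃ y ∈ W₂, toWeakSpace ℝ Y y = p.2 := by
        simpa [hKdef, Set.mem_prod] using hp
      have hyn : ‖(toWeakSpace ℝ Y).symm p.2‖ ≤ M := by
        rw [← hyeq]; simpa using hM y hy
      calc ‖φ (t (p.1 - p₀.1) ((toWeakSpace ℝ Y).symm p.2))‖
          ≤ ‖φ‖ * ‖t (p.1 - p₀.1) ((toWeakSpace ℝ Y).symm p.2)‖ := φ.le_opNorm _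
        _ ≤ ‖φ‖ * (‖t‖ * ‖p.1 - p₀.1‖ * ‖(toWeakSpace ℝ Y).symm p.2‖) := by
            gcongr; exact (t.le_opNorm₂ _ _)
        _ ≤ ‖φ‖ * (‖t‖ * ‖p.1 - p₀.1‖ * M) := by gcongr
        _ = ‖φ‖ * ‖t‖ * ‖p.1 - p₀.1‖ * M := by ring
    · have : Tendsto (fun p : X × WeakSpace ℝ Y => p.1) (nhdsWithin p₀ K) (nhds p₀.1) :=
        (continuous_fst.tendsto p₀).mono_left nhdsWithin_le_nhds
      have h2 : Tendsto (fun p : X × WeakSpace ℝ Y => ‖φ‖ * ‖t‖ * ‖p.1 - p₀.1‖ * M)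
          (nhdsWithin p₀ K) (nhds (‖φ‖ * ‖t‖ * ‖p₀.1 - p₀.1‖ * M)) := by
        exact (((tendsto_const_nhds.mul ((this.sub tendsto_const_nhds).norm)).mul
          tendsto_const_nhds))
      simpa using h2
  have := hlim1.add hlim2
  simp only [key]
  convert this using 2
  simp


/-- if `W₁` is norm compact and `W₂` is weakly compact, then `W₁ ⊗ W₂` is
weakly compact in `X ⊗π Y`. -/
theorem statement1 {X Y Z : Type*}
    [NormedAddCommGroup X] [NormedSpace ℝ X] [CompleteSpace X]
    [NormedAddCommGroup Y] [NormedSpace ℝ Y] [CompleteSpace Y]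
    [NormedAddCommGroup Z] [NormedSpace ℝ Z] [CompleteSpace Z]
    (t : X →L[ℝ] Y →L[ℝ] Z) (ht : IsProjTensorProduct t)
    (W₁ : Set X) (hW₁ : IsCompact W₁)
    (W₂ : Set Y) (hW₂ : WeaklyCompact W₂) :
    WeaklyCompact {z : Z | ∃ x ∈ W₁, ∃ y ∈ W₂, z = t x y} :=
  statement1' t W₁ hW₁ W₂ hW₂
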